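/- arXiv:2004.05423 — 2 statements merged into one kernel-verified Lean document; each statement's English description precedes it below -/
import Mathlib

section
/- Let h(t) be a real polynomial of degree s ≤ d with nonnegative coefficients satisfying Property (S), let r ≥ d+1-s be an integer, and let (p̃, q̃) be the symmetric decomposition of U_r^{d+1}h(t) with respect to d. Then q̃ has only nonnegative coefficients. -/
open Polynomial

/-- The geometric polynomial `1 + t + ⋯ + t^{r-1}`. -/
noncomputable def geomPoly (r : ℕ) : ℝ[X] := ∑ j ∈ Finset.range r, X ^ j

/-- `sect r i f` is the polynomial `f^{⟨r,i⟩}` whose `n`-th coefficient is the `(r*n+i)`-th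
coefficient of `f` (valid definition for `r ≥ 1`). -/
noncomputable def sect (r i : ℕ) (f : ℝ[X]) : ℝ[X] :=
  ∑ n ∈ Finset.range (f.natDegree + 1), C (f.coeff (r * n + i)) * X ^ n

/-- The operator `U_r^D h = (h·(1+t+⋯+t^{r-1})^D)^{⟨r,0⟩}`. -/
noncomputable def Uop (r D : ℕ) (h : ℝ[X]) : ℝ[X] := sect r 0 (h * geomPoly r ^ D)

/-- `(p, q)` is the symmetric decomposition of `h` with respect to `d`. -/
def IsSymmDecomp (d : ℕ) (h p q : ℝ[X]) : Prop :=
  h = p + X * q ∧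
  p.natDegree ≤ d ∧ (∀ i ≤ d, p.coeff i = p.coeff (d - i)) ∧
  q.natDegree ≤ d - 1 ∧ (∀ i ≤ d - 1, q.coeff i = q.coeff (d - 1 - i))

/-- A real polynomial is real-rooted if it is zero or all of its complex roots are real. -/
def RealRooted (f : ℝ[X]) : Prop :=
  f = 0 ∨ ∀ z : ℂ, aeval z f = 0 → z.im = 0

/-- The real roots of `f`, with multiplicity, in weakly decreasing order. -/
noncomputable def descRoots (f : ℝ[X]) : List ℝ := (f.roots.sort (· ≤ ·)).reverse

/-- `Interlaces f g` means `f ⪯ g`: both are real-rooted and, unless one of them is zero,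
the decreasingly ordered root lists `s` of `f` and `t` of `g` satisfy
`⋯ ≤ s_2 ≤ t_2 ≤ s_1 ≤ t_1` (with `deg g = deg f` or `deg f + 1`). -/
def Interlaces (f g : ℝ[X]) : Prop :=
  RealRooted f ∧ RealRooted g ∧
  (f = 0 ∨ g = 0 ∨
    (((descRoots g).length = (descRoots f).length ∨
      (descRoots g).length = (descRoots f).length + 1) ∧
     (∀ i, (hf : i < (descRoots f).length) → (hg : i < (descRoots g).length) →
        (descRoots f).get ⟨i, hf⟩ ≤ (descRoots g).get ⟨i, hg⟩) ∧
     (∀ i, (hg : i + 1 < (descRoots g).length) → (hf : i < (descRoots f).length) →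
        (descRoots g).get ⟨i + 1, hg⟩ ≤ (descRoots f).get ⟨i, hf⟩)))

/-- The coefficient of `h` at an integer index, zero for negative indices. -/
noncomputable def coeffZ (h : ℝ[X]) (j : ℤ) : ℝ := if 0 ≤ j then h.coeff j.toNat else 0

/-- Property (H): `h_0 + ⋯ + h_i ≥ h_d + h_{d-1} + ⋯ + h_{d-i+1}` for all `i`. -/
def PropH (d : ℕ) (h : ℝ[X]) : Prop :=
  ∀ i : ℕ, ∑ j ∈ Finset.range i, coeffZ h ((d : ℤ) - j) ≤ ∑ j ∈ Finset.range (i + 1), h.coeff j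

/-- Property (S): `h_0 + ⋯ + h_i ≤ h_s + h_{s-1} + ⋯ + h_{s-i}` for all `i`. -/
def PropS (s : ℕ) (h : ℝ[X]) : Prop :=
  ∀ i : ℕ, ∑ j ∈ Finset.range (i + 1), h.coeff j ≤ ∑ j ∈ Finset.range (i + 1), coeffZ h ((s : ℤ) - j)


lemma geomPoly_coeff (r n : ℕ) : (geomPoly r).coeff n = if n < r then 1 else 0 := by
  rw [geomPoly, finset_sum_coeff]
  simp only [coeff_X_pow]
  rw [Finset.sum_ite_eq (Finset.range r) n (fun _ => (1:ℝ))]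
  simp [Finset.mem_range]

lemma geomPoly_natDegree_le (r : ℕ) : (geomPoly r).natDegree ≤ r - 1 := by
  apply Polynomial.natDegree_le_iff_coeff_eq_zero.mpr
  intro m hm
  rw [geomPoly_coeff]
  simp only [ite_eq_right_iff]
  intro hmr; omega

lemma coeff_mul_nonneg {p q : ℝ[X]} (hp : ∀ n, 0 ≤ p.coeff n) (hq : ∀ n, 0 ≤ q.coeff n)
    (n : ℕ) : 0 ≤ (p * q).coeff n := by
  rw [coeff_mul]
  exact Finset.sum_nonneg fun x _ => mul_nonneg (hp _) (hq _)

lemma geomPow_coeff_nonneg (r D n : ℕ) : 0 ≤ ((geomPoly r) ^ D).coeff n := by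
  induction D generalizing n with
  | zero => simp [coeff_one]; positivity
  | succ D ih =>
    rw [pow_succ]
    refine coeff_mul_nonneg ih (fun m => ?_) n
    rw [geomPoly_coeff]; positivity

lemma geomPow_natDegree_le (r D : ℕ) : ((geomPoly r) ^ D).natDegree ≤ (r - 1) * D := by
  calc ((geomPoly r) ^ D).natDegree ≤ D * (geomPoly r).natDegree := natDegree_pow_le
  _ ≤ D * (r - 1) := Nat.mul_le_mul_left D (geomPoly_natDegree_le r)
  _ = (r - 1) * D := Nat.mul_comm _ _

lemma reflect_geomPoly (r : ℕ) : reflect (r - 1) (geomPoly r) = geomPoly r := by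
  ext n
  rw [coeff_reflect, geomPoly_coeff, geomPoly_coeff]
  rcases le_or_gt n (r - 1) with hn | hn
  · rw [revAt_le hn]
    congr 1
    simp only [eq_iff_iff]
    omega
  · rw [revAt_eq_self_of_lt hn]

lemma reflect_geomPow (r D : ℕ) : reflect ((r - 1) * D) ((geomPoly r) ^ D) = (geomPoly r) ^ D := by
  induction D with
  | zero => simp
  | succ D ih =>
    rw [pow_succ, show (r-1)*(D+1) = (r-1)*D + (r-1) by ring,
      reflect_mul _ _ (geomPow_natDegree_le r D) (geomPoly_natDegree_le r), ih,
      reflect_geomPoly]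

lemma geomPow_coeff_symm (r D x : ℕ) (hx : x ≤ (r - 1) * D) :
    ((geomPoly r) ^ D).coeff ((r - 1) * D - x) = ((geomPoly r) ^ D).coeff x := by
  conv_rhs => rw [← reflect_geomPow r D, coeff_reflect, revAt_le hx]

noncomputable def cum (p : ℝ[X]) (W : ℕ) (n : ℤ) : ℝ :=
  ∑ x ∈ Finset.range W, if (x : ℤ) ≤ n then p.coeff x else 0

lemma cum_mono (p : ℝ[X]) (W : ℕ) (hp : ∀ x, 0 ≤ p.coeff x) {n m : ℤ} (hnm : n ≤ m) :
    cum p W n ≤ cum p W m := by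
  apply Finset.sum_le_sum
  intro x _
  by_cases hx : (x : ℤ) ≤ n
  · rw [if_pos hx, if_pos (hx.trans hnm)]
  · rw [if_neg hx]
    by_cases hx' : (x : ℤ) ≤ m
    · rw [if_pos hx']; exact hp x
    · rw [if_neg hx']

lemma cum_neg (p : ℝ[X]) (W : ℕ) {n : ℤ} (hn : n < 0) : cum p W n = 0 := by
  apply Finset.sum_eq_zero
  intro x _
  rw [if_neg (by omega : ¬ (x : ℤ) ≤ n)]

lemma cum_total (p : ℝ[X]) (W : ℕ) {n : ℤ} (hn : (W : ℤ) - 1 ≤ n) :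
    cum p W n = ∑ x ∈ Finset.range W, p.coeff x := by
  apply Finset.sum_congr rfl
  intro x hx
  rw [Finset.mem_range] at hx
  rw [if_pos (by omega : (x : ℤ) ≤ n)]

lemma cum_sub_one (p : ℝ[X]) (W : ℕ) (hW : ∀ x, W ≤ x → p.coeff x = 0) (n : ℤ) :
    cum p W n - cum p W (n - 1) = coeffZ p n := by
  rw [cum, cum, ← Finset.sum_sub_distrib]
  have hterm : ∀ x ∈ Finset.range W,
      ((if (x : ℤ) ≤ n then p.coeff x else 0) - (if (x : ℤ) ≤ n - 1 then p.coeff x else 0))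
        = if (x : ℤ) = n then p.coeff x else 0 := by
    intro x _
    by_cases h1 : (x : ℤ) = n
    · rw [if_pos h1, if_pos (le_of_eq h1), if_neg (by omega)]; ring
    · rw [if_neg h1]
      by_cases h2 : (x : ℤ) ≤ n
      · rw [if_pos h2, if_pos (by omega)]; ring
      · rw [if_neg h2, if_neg (by omega)]; ring
  rw [Finset.sum_congr rfl hterm]
  by_cases hn : 0 ≤ n
  · rw [coeffZ, if_pos hn]
    rw [Finset.sum_eq_single n.toNat]
    · rw [if_pos (by omega)]
    · intro x _ hx
      rw [if_neg (by omega)]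
    · intro hmem
      rw [Finset.mem_range, not_lt] at hmem
      rw [if_pos (by omega), hW _ hmem]
  · rw [coeffZ, if_neg hn]
    apply Finset.sum_eq_zero
    intro x _
    rw [if_neg (by omega)]

lemma cum_window (p : ℝ[X]) (W : ℕ) (hW : ∀ x, W ≤ x → p.coeff x = 0) (r : ℕ) (m : ℤ) :
    ∑ j ∈ Finset.range r, coeffZ p (m - j) = cum p W m - cum p W (m - r) := by
  induction r with
  | zero => simp
  | succ r ih =>
    rw [Finset.sum_range_succ, ih, ← cum_sub_one p W hW (m - r)]
    push_cast
    ring_nf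

lemma coeffZ_mul_geom (b : ℝ[X]) (r : ℕ) (n : ℤ) :
    coeffZ (b * geomPoly r) n = ∑ j ∈ Finset.range r, coeffZ b (n - j) := by
  by_cases hn : 0 ≤ n
  · rw [coeffZ, if_pos hn]
    rw [geomPoly, Finset.mul_sum, finset_sum_coeff]
    apply Finset.sum_congr rfl
    intro j _
    rw [coeff_mul_X_pow']
    by_cases hj : (j : ℤ) ≤ n
    · rw [if_pos (by omega), coeffZ, if_pos (by omega)]
      congr 1
      omega
    · rw [if_neg (by omega), coeffZ, if_neg (by omega)]
  · rw [coeffZ, if_neg hn]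
    symm
    apply Finset.sum_eq_zero
    intro j _
    rw [coeffZ, if_neg (by omega)]

lemma coeffZ_geomPow_succ (r D : ℕ) (n : ℤ) :
    coeffZ ((geomPoly r) ^ (D + 1)) n =
      cum ((geomPoly r) ^ D) ((r - 1) * D + 1) n - cum ((geomPoly r) ^ D) ((r - 1) * D + 1) (n - r) := by
  have hW : ∀ x, (r - 1) * D + 1 ≤ x → ((geomPoly r) ^ D).coeff x = 0 := by
    intro x hx
    exact coeff_eq_zero_of_natDegree_lt (lt_of_le_of_lt (geomPow_natDegree_le r D) (by omega))
  rw [pow_succ, coeffZ_mul_geom, cum_window _ _ hW]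

lemma cum_geomPow_reflect (r D : ℕ) (n : ℤ) :
    cum ((geomPoly r) ^ D) ((r - 1) * D + 1) n
      + cum ((geomPoly r) ^ D) ((r - 1) * D + 1) (((r - 1) * D : ℕ) - 1 - n)
      = cum ((geomPoly r) ^ D) ((r - 1) * D + 1) (((r - 1) * D : ℕ)) := by
  set N := (r - 1) * D with hN
  have htot : cum ((geomPoly r) ^ D) (N + 1) ((N : ℕ) : ℤ)
      = ∑ x ∈ Finset.range (N + 1), ((geomPoly r) ^ D).coeff x := cum_total _ _ (by omega)
  rw [htot]
  have hrefl : cum ((geomPoly r) ^ D) (N + 1) ((N : ℤ) - 1 - n)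
      = ∑ x ∈ Finset.range (N + 1), if ¬ ((x : ℤ) ≤ n) then ((geomPoly r) ^ D).coeff x else 0 := by
    rw [cum, ← Finset.sum_range_reflect (fun x => if (x : ℤ) ≤ (N : ℤ) - 1 - n then ((geomPoly r) ^ D).coeff x else 0) (N + 1)]
    apply Finset.sum_congr rfl
    intro x hx
    rw [Finset.mem_range] at hx
    have hxN : x ≤ N := by omega
    have h1 : N + 1 - 1 - x = N - x := by omega
    rw [h1]
    have h2 : ((N - x : ℕ) : ℤ) = (N : ℤ) - x := by omega
    rw [h2, geomPow_coeff_symm r D x hxN]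
    congr 1
    simp only [eq_iff_iff]
    omega
  rw [hrefl, cum, ← Finset.sum_add_distrib]
  apply Finset.sum_congr rfl
  intro x _
  by_cases hx : (x : ℤ) ≤ n
  · rw [if_pos hx, if_neg (by omega)]; ring
  · rw [if_neg hx, if_pos hx]; ring

lemma abel_nonneg (N : ℕ) (Φ dd : ℕ → ℝ)
    (hpart : ∀ i, i + 1 < N → ∑ k ∈ Finset.range (i + 1), dd k ≤ 0)
    (htot : ∑ k ∈ Finset.range N, dd k = 0)
    (hmono : ∀ i, Φ i ≤ Φ (i + 1)) :
    0 ≤ ∑ k ∈ Finset.range N, dd k * Φ k := by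
  have hparts := Finset.sum_range_by_parts Φ dd N
  simp only [smul_eq_mul] at hparts
  have h1 : ∑ k ∈ Finset.range N, dd k * Φ k = ∑ k ∈ Finset.range N, Φ k * dd k := by
    apply Finset.sum_congr rfl; intro k _; ring
  rw [h1, hparts, htot, mul_zero, zero_sub]
  rw [neg_nonneg]
  apply Finset.sum_nonpos
  intro i hi
  rw [Finset.mem_range] at hi
  have h2 : 0 ≤ Φ (i + 1) - Φ i := by linarith [hmono i]
  have h3 : ∑ j ∈ Finset.range (i + 1), dd j ≤ 0 := hpart i (by omega)
  exact mul_nonpos_of_nonneg_of_nonpos h2 h3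

/-- If `h` has degree `s ≤ d`, nonnegative coefficients and satisfies
Property (S), then for `r ≥ d+1-s` the second part `q̃` of the symmetric decomposition of
`U_r^{d+1} h` has only nonnegative coefficients. -/
theorem statement5 (d s : ℕ) (h : ℝ[X]) (hne : h ≠ 0) (hdeg : h.natDegree = s)
    (hsd : s ≤ d) (hnn : ∀ i, 0 ≤ h.coeff i) (hS : PropS s h)
    (r : ℕ) (hr : d + 1 - s ≤ r)
    (pt qt : ℝ[X]) (hpq : IsSymmDecomp d (Uop r (d + 1) h) pt qt) :
    ∀ i, 0 ≤ qt.coeff i := by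
  obtain ⟨hsum, hpdeg, hpsym, hqdeg, hqsym⟩ := hpq
  have hr1 : 1 ≤ r := by omega
  have hds : d + 1 ≤ r + s := by omega
  have hdsz : (d : ℤ) + 1 ≤ (r : ℤ) + (s : ℤ) := by exact_mod_cast hds
  -- abbreviations
  set G : ℝ[X] := geomPoly r ^ (d + 1) with hGdef
  set b : ℝ[X] := geomPoly r ^ d with hbdef
  set W : ℕ := (r - 1) * d + 1 with hWdef
  set B : ℤ → ℝ := cum b W with hBdef
  set A : ℕ → ℝ := fun n => (h * G).coeff (r * n) with hAdef
  have hAeval : ∀ n, A n = (h * G).coeff (r * n) := fun n => rfl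
  have hBmono : ∀ {n m : ℤ}, n ≤ m → B n ≤ B m :=
    fun hnm => cum_mono b W (fun x => geomPow_coeff_nonneg r d x) hnm
  have hcoeffG : ∀ m : ℤ, coeffZ G m = B m - B (m - r) := by
    intro m
    have := coeffZ_geomPow_succ r d m
    rw [← hbdef, ← hWdef, ← hBdef] at this
    exact this
  have hNcast : (((r - 1) * d : ℕ) : ℤ) = (r : ℤ) * d - d := by
    have h1 : ((r - 1 : ℕ) : ℤ) = (r : ℤ) - 1 := by omega
    push_cast [h1]; ring
  -- Uop coefficients
  have hA : ∀ n, (Uop r (d + 1) h).coeff n = A n := by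
    intro n
    rw [Uop, sect, ← hGdef, finset_sum_coeff]
    simp only [coeff_C_mul, coeff_X_pow, mul_ite, mul_one, mul_zero]
    rw [Finset.sum_ite_eq (Finset.range ((h * G).natDegree + 1)) n
      (fun n' => (h * G).coeff (r * n' + 0))]
    by_cases hn : n ∈ Finset.range ((h * G).natDegree + 1)
    · rw [if_pos hn, hAeval]; norm_num
    · rw [if_neg hn, hAeval]
      rw [Finset.mem_range, not_lt] at hn
      symm
      apply coeff_eq_zero_of_natDegree_lt
      have h2 : n ≤ r * n := Nat.le_mul_of_pos_left n hr1
      omega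
  have hmulsucc : (r - 1) * (d + 1) + (d + 1) = r * (d + 1) := by
    calc (r - 1) * (d + 1) + (d + 1) = ((r - 1) + 1) * (d + 1) := by ring
    _ = r * (d + 1) := by congr 1; omega
  have hAzero : ∀ n, d + 1 ≤ n → A n = 0 := by
    intro n hn
    rw [hAeval]
    apply coeff_eq_zero_of_natDegree_lt
    have h1 : (h * G).natDegree ≤ s + (r - 1) * (d + 1) := by
      refine le_trans natDegree_mul_le ?_
      exact Nat.add_le_add (le_of_eq hdeg) (geomPow_natDegree_le r (d + 1))
    have h2 : r * (d + 1) ≤ r * n := Nat.mul_le_mul_left r hn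
    omega
  have hAdd : ∀ n, A n = pt.coeff n + (X * qt).coeff n := by
    intro n
    rw [← hA, hsum, coeff_add]
  intro i
  rcases lt_or_ge i d with hid | hid
  swap
  · -- trivial case i ≥ d
    have h1 : A (i + 1) = 0 := hAzero _ (by omega)
    have h2 : pt.coeff (i + 1) = 0 := coeff_eq_zero_of_natDegree_lt (by omega)
    have h3 := hAdd (i + 1)
    rw [coeff_X_mul] at h3
    rw [h1, h2] at h3
    linarith
  -- main case : i < d
  have hrec : ∀ j, j < d → A (d - j) - A j = qt.coeff j - (X * qt).coeff j := by
    intro j hj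
    have e2 : A (d - j) = pt.coeff (d - j) + qt.coeff j := by
      rw [hAdd (d - j)]
      congr 1
      obtain ⟨m, hm⟩ : ∃ m, d - j = m + 1 := ⟨d - j - 1, by omega⟩
      rw [hm, coeff_X_mul]
      have e4 := hqsym m (by omega)
      rw [e4]
      congr 1
      omega
    have e3 : pt.coeff j = pt.coeff (d - j) := hpsym j (by omega)
    rw [hAdd j, e2, e3]
    ring
  have hqf : ∀ i', i' < d → qt.coeff i' = ∑ j ∈ Finset.range (i' + 1), (A (d - j) - A j) := by
    intro i'
    induction i' with
    | zero =>
      intro hd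
      rw [Finset.sum_range_one, hrec 0 hd, mul_coeff_zero, coeff_X_zero, zero_mul, sub_zero]
    | succ n ih =>
      intro hd
      rw [Finset.sum_range_succ, ← ih (by omega), hrec (n + 1) hd, coeff_X_mul]
      ring
  rw [hqf i hid]
  -- expansion of coefficients of h * G
  have hfG : ∀ N : ℕ, (h * G).coeff N
      = ∑ k ∈ Finset.range (s + 1), h.coeff k * coeffZ G ((N : ℤ) - k) := by
    intro N
    rw [coeff_mul, Finset.Nat.sum_antidiagonal_eq_sum_range_succ_mk]
    have e1 : ∀ k ∈ Finset.range (N + 1),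
        h.coeff k * G.coeff (N - k) = h.coeff k * coeffZ G ((N : ℤ) - k) := by
      intro k hk
      rw [Finset.mem_range] at hk
      rw [coeffZ, if_pos (by omega : (0:ℤ) ≤ (N : ℤ) - k)]
      congr 2
      omega
    rw [Finset.sum_congr rfl e1]
    have e2 : ∑ k ∈ Finset.range (N + 1), h.coeff k * coeffZ G ((N : ℤ) - k)
        = ∑ k ∈ Finset.range (N + 1 + (s + 1)), h.coeff k * coeffZ G ((N : ℤ) - k) := by
      apply Finset.sum_subset (Finset.range_subset_range.mpr (by omega))
      intro k _ hk
      rw [Finset.mem_range, not_lt] at hk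
      rw [coeffZ, if_neg (by omega), mul_zero]
    have e3 : ∑ k ∈ Finset.range (s + 1), h.coeff k * coeffZ G ((N : ℤ) - k)
        = ∑ k ∈ Finset.range (N + 1 + (s + 1)), h.coeff k * coeffZ G ((N : ℤ) - k) := by
      apply Finset.sum_subset (Finset.range_subset_range.mpr (by omega))
      intro k _ hk
      rw [Finset.mem_range, not_lt] at hk
      rw [coeff_eq_zero_of_natDegree_lt (by omega), zero_mul]
    rw [e2, ← e3]
  -- Φ
  set Φ : ℕ → ℝ := fun k => B ((r : ℤ) * i + r - d - 1 + k) - B ((r : ℤ) * i - k) with hΦdef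
  have hΦeval : ∀ k : ℕ, Φ k = B ((r : ℤ) * i + r - d - 1 + k) - B ((r : ℤ) * i - k) :=
    fun k => rfl
  -- the swap
  have hswap : ∑ j ∈ Finset.range (i + 1), (A (d - j) - A j)
      = ∑ k ∈ Finset.range (s + 1), h.coeff k * Φ k := by
    have e1 : ∀ j ∈ Finset.range (i + 1), A (d - j) - A j
        = ∑ k ∈ Finset.range (s + 1),
            h.coeff k * (coeffZ G ((r : ℤ) * ((d : ℤ) - j) - k) - coeffZ G ((r : ℤ) * j - k)) := by
      intro j hj
      rw [Finset.mem_range] at hj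
      have c1 : ((r * (d - j) : ℕ) : ℤ) = (r : ℤ) * ((d : ℤ) - j) := by
        have hc : ((d - j : ℕ) : ℤ) = (d : ℤ) - j := by omega
        push_cast [hc]; ring
      have c2 : ((r * j : ℕ) : ℤ) = (r : ℤ) * j := by push_cast; ring
      rw [hAeval, hAeval, hfG, hfG, c1, c2, ← Finset.sum_sub_distrib]
      apply Finset.sum_congr rfl
      intro k _
      ring
    rw [Finset.sum_congr rfl e1, Finset.sum_comm]
    apply Finset.sum_congr rfl
    intro k hk
    rw [Finset.mem_range] at hk
    have hks : k ≤ s := by omega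
    have hkdz : (k : ℤ) ≤ d := by exact_mod_cast le_trans hks hsd
    -- telescoping sums
    have htel1 : ∑ j ∈ Finset.range (i + 1), coeffZ G ((r : ℤ) * j - k) = B ((r : ℤ) * i - k) := by
      have step : ∀ j ∈ Finset.range (i + 1), coeffZ G ((r : ℤ) * j - k)
          = (fun j : ℕ => B ((r : ℤ) * j - k - r)) (j + 1)
            - (fun j : ℕ => B ((r : ℤ) * j - k - r)) j := by
        intro j _
        rw [hcoeffG]
        congr 2
        push_cast; ring
      rw [Finset.sum_congr rfl step,
        Finset.sum_range_sub (fun j : ℕ => B ((r : ℤ) * j - k - r)) (i + 1)]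
      have z : B ((r : ℤ) * ((0 : ℕ) : ℤ) - k - r) = 0 := by
        rw [hBdef]
        apply cum_neg
        have : ((0:ℕ):ℤ) = 0 := rfl
        rw [this, mul_zero]
        omega
      have e : (r : ℤ) * (((i + 1 : ℕ)) : ℤ) - k - r = (r : ℤ) * (i : ℤ) - k := by
        push_cast; ring
      rw [e, z, sub_zero]
    have htel2 : ∑ j ∈ Finset.range (i + 1), coeffZ G ((r : ℤ) * ((d : ℤ) - j) - k)
        = B ((r : ℤ) * d - k) - B ((r : ℤ) * ((d : ℤ) - i - 1) - k) := by
      have step : ∀ j ∈ Finset.range (i + 1), coeffZ G ((r : ℤ) * ((d : ℤ) - j) - k)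
          = (fun j : ℕ => B ((r : ℤ) * ((d : ℤ) - j) - k)) j
            - (fun j : ℕ => B ((r : ℤ) * ((d : ℤ) - j) - k)) (j + 1) := by
        intro j _
        rw [hcoeffG]
        congr 2
        push_cast; ring
      rw [Finset.sum_congr rfl step,
        Finset.sum_range_sub' (fun j : ℕ => B ((r : ℤ) * ((d : ℤ) - j) - k)) (i + 1)]
      have e0 : (r : ℤ) * ((d : ℤ) - ((0 : ℕ) : ℤ)) - k = (r : ℤ) * d - k := by
        push_cast; ring
      have e1' : (r : ℤ) * ((d : ℤ) - (((i + 1 : ℕ)) : ℤ)) - k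
          = (r : ℤ) * ((d : ℤ) - i - 1) - k := by
        push_cast; ring
      rw [e0, e1']
    rw [← Finset.mul_sum, Finset.sum_sub_distrib, htel1, htel2]
    -- evaluate B (r*d - k) via total and reflect
    have ht1 : cum b W ((r : ℤ) * d - k) = ∑ x ∈ Finset.range W, b.coeff x := by
      apply cum_total
      rw [hWdef, Nat.cast_add, Nat.cast_one, hNcast]
      linarith
    have ht2 : cum b W ((((r - 1) * d : ℕ)) : ℤ) = ∑ x ∈ Finset.range W, b.coeff x := by
      apply cum_total
      rw [hWdef, Nat.cast_add, Nat.cast_one]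
      omega
    have htotk : B ((r : ℤ) * d - k) = B ((((r - 1) * d : ℕ)) : ℤ) := by
      rw [hBdef, ht1, ht2]
    have hrefl := cum_geomPow_reflect r d ((r : ℤ) * ((d : ℤ) - i - 1) - k)
    rw [← hbdef, ← hWdef, ← hBdef] at hrefl
    have hidx : ((((r - 1) * d : ℕ)) : ℤ) - 1 - ((r : ℤ) * ((d : ℤ) - i - 1) - k)
        = (r : ℤ) * i + r - d - 1 + k := by
      rw [hNcast]; ring
    rw [hidx] at hrefl
    rw [hΦeval k, htotk]
    congr 1
    linarith [hrefl]
  rw [hswap]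
  -- Φ is monotone
  have hΦmono : ∀ k : ℕ, Φ k ≤ Φ (k + 1) := by
    intro k
    rw [hΦeval, hΦeval]
    have m1 : B ((r : ℤ) * i + r - d - 1 + k) ≤ B ((r : ℤ) * i + r - d - 1 + ((k + 1 : ℕ) : ℤ)) := by
      apply hBmono; push_cast; linarith
    have m2 : B ((r : ℤ) * i - ((k + 1 : ℕ) : ℤ)) ≤ B ((r : ℤ) * i - k) := by
      apply hBmono; push_cast; linarith
    linarith
  -- Φ pairing
  have hΦpair : ∀ k, k ≤ s → 0 ≤ Φ k + Φ (s - k) := by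
    intro k hks
    have hc : ((s - k : ℕ) : ℤ) = (s : ℤ) - k := by omega
    rw [hΦeval, hΦeval, hc]
    have m1 : B ((r : ℤ) * i - ((s : ℤ) - k)) ≤ B ((r : ℤ) * i + r - d - 1 + k) := by
      apply hBmono; linarith
    have m2 : B ((r : ℤ) * i - k) ≤ B ((r : ℤ) * i + r - d - 1 + ((s : ℤ) - k)) := by
      apply hBmono; linarith
    linarith
  -- Abel summation: X - Y ≥ 0
  have habel : 0 ≤ ∑ k ∈ Finset.range (s + 1), (h.coeff k - h.coeff (s - k)) * Φ k := by
    apply abel_nonneg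
    · intro i' hi'
      have hSi := hS i'
      have e : ∑ j ∈ Finset.range (i' + 1), coeffZ h ((s : ℤ) - j)
          = ∑ j ∈ Finset.range (i' + 1), h.coeff (s - j) := by
        apply Finset.sum_congr rfl
        intro j hj
        rw [Finset.mem_range] at hj
        rw [coeffZ, if_pos (by omega : (0:ℤ) ≤ (s : ℤ) - j)]
        congr 1
        omega
      rw [e] at hSi
      rw [Finset.sum_sub_distrib]
      linarith
    · rw [Finset.sum_sub_distrib]
      have e := Finset.sum_range_reflect (fun j => h.coeff j) (s + 1)
      simp only [Nat.add_sub_cancel] at e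
      rw [e]
      ring
    · exact hΦmono
  -- X + Y ≥ 0
  have hY : ∑ k ∈ Finset.range (s + 1), h.coeff (s - k) * Φ k
      = ∑ k ∈ Finset.range (s + 1), h.coeff k * Φ (s - k) := by
    rw [← Finset.sum_range_reflect (fun k => h.coeff (s - k) * Φ k) (s + 1)]
    apply Finset.sum_congr rfl
    intro k hk
    rw [Finset.mem_range] at hk
    simp only [Nat.add_sub_cancel]
    congr 2
    omega
  have hXY : 0 ≤ ∑ k ∈ Finset.range (s + 1), h.coeff k * Φ k
      + ∑ k ∈ Finset.range (s + 1), h.coeff (s - k) * Φ k := by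
    rw [hY, ← Finset.sum_add_distrib]
    apply Finset.sum_nonneg
    intro k hk
    rw [Finset.mem_range] at hk
    have p1 := hΦpair k (by omega)
    have p2 := hnn k
    nlinarith
  have hfinal : ∑ k ∈ Finset.range (s + 1), (h.coeff k - h.coeff (s - k)) * Φ k
      = ∑ k ∈ Finset.range (s + 1), h.coeff k * Φ k
        - ∑ k ∈ Finset.range (s + 1), h.coeff (s - k) * Φ k := by
    rw [← Finset.sum_sub_distrib]
    apply Finset.sum_congr rfl
    intro k _
    ring
  rw [hfinal] at habel
  linarith
end

section
/- Let h(t) be a real polynomial, let r ≥ 1 and d ≥ 0 be integers, and for 0 ≤ i ≤ r-1 set a_{h,d}^{⟨r,i⟩}(t) := (h(t)·(1+t+⋯+t^{r-1})^d)^{⟨r,i⟩}. Then for all 0 ≤ i ≤ r-1, a_{h,d+1}^{⟨r,i⟩}(t) = a_{h,d}^{⟨r,0⟩}(t) + a_{h,d}^{⟨r,1⟩}(t) + ⋯ + a_{h,d}^{⟨r,i⟩}(t) + t·a_{h,d}^{⟨r,i+1⟩}(t) + ⋯ + t·a_{h,d}^{⟨r,r-1⟩}(t). -/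
open Polynomial

lemma sect_coeff (r : ℕ) (hr : 1 ≤ r) (i : ℕ) (f : ℝ[X]) (n : ℕ) :
    (sect r i f).coeff n = f.coeff (r * n + i) := by
  unfold sect
  rw [finset_sum_coeff]
  simp only [coeff_C_mul, coeff_X_pow, mul_ite, mul_one, mul_zero]
  rw [Finset.sum_ite_eq (Finset.range (f.natDegree + 1)) n]
  by_cases hn : n ∈ Finset.range (f.natDegree + 1)
  · simp [hn]
  · simp only [hn, if_false]
    symm
    apply coeff_eq_zero_of_natDegree_lt
    simp only [Finset.mem_range, not_lt] at hn
    have : n ≤ r * n := Nat.le_mul_of_pos_left n hr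
    omega

/-- (Recursion of Lemma `ans2`.) With
`a_{h,d}^{⟨r,i⟩} = (h·(1+t+⋯+t^{r-1})^d)^{⟨r,i⟩}`, for all `0 ≤ i ≤ r-1`:
`a_{h,d+1}^{⟨r,i⟩} = a_{h,d}^{⟨r,0⟩} + ⋯ + a_{h,d}^{⟨r,i⟩} + t·a_{h,d}^{⟨r,i+1⟩} + ⋯ +
t·a_{h,d}^{⟨r,r-1⟩}`. -/
theorem statement10 (h : ℝ[X]) (r d : ℕ) (hr : 1 ≤ r) (i : ℕ) (hi : i ≤ r - 1) :
    sect r i (h * geomPoly r ^ (d + 1)) =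
      (∑ j ∈ Finset.range (i + 1), sect r j (h * geomPoly r ^ d)) +
      ∑ j ∈ Finset.Ico (i + 1) r, X * sect r j (h * geomPoly r ^ d) := by
  have hir : i + 1 ≤ r := by omega
  set F := h * geomPoly r ^ d with hF
  have key : h * geomPoly r ^ (d + 1) = F * geomPoly r := by rw [hF]; ring
  ext n
  rw [sect_coeff r hr, key]
  rw [show (geomPoly r) = ∑ j ∈ Finset.range r, (X : ℝ[X]) ^ j from rfl]
  rw [Finset.mul_sum, finset_sum_coeff]
  simp only [coeff_mul_X_pow']
  rw [coeff_add, finset_sum_coeff, finset_sum_coeff]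
  simp only [sect_coeff r hr]
  have hXc : ∀ j, (X * sect r j F).coeff n =
      if n = 0 then 0 else F.coeff (r * (n - 1) + j) := by
    intro j
    cases n with
    | zero => simp [mul_coeff_zero]
    | succ m => rw [coeff_X_mul, sect_coeff r hr]; simp
  simp only [hXc]
  rw [← Finset.sum_range_add_sum_Ico _ hir]
  congr 1
  · rw [← Finset.sum_range_reflect (fun j => F.coeff (r * n + j)) (i + 1)]
    refine Finset.sum_congr rfl fun j hj => ?_
    simp only [Finset.mem_range] at hj
    have hji : j ≤ i := by omega
    rw [if_pos (by omega)]
    congr 1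
    omega
  · rcases Nat.eq_zero_or_pos n with hn0 | hn0
    · subst hn0
      refine Finset.sum_congr rfl fun j hj => ?_
      simp only [Finset.mem_Ico] at hj
      rw [if_neg (by omega), if_pos rfl]
    · obtain ⟨m, rfl⟩ : ∃ m, n = m + 1 := ⟨n - 1, by omega⟩
      refine Finset.sum_nbij' (fun j => r + i - j) (fun j => r + i - j) ?_ ?_ ?_ ?_ ?_
      · intro j hj; simp only [Finset.mem_Ico] at *; omega
      · intro j hj; simp only [Finset.mem_Ico] at *; omega
      · intro j hj; simp only [Finset.mem_Ico] at hj; omega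
      · intro j hj; simp only [Finset.mem_Ico] at hj; omega
      · intro j hj
        simp only [Finset.mem_Ico] at hj
        have h1 : j ≤ r * (m + 1) + i := by
          have : r * 1 ≤ r * (m + 1) := Nat.mul_le_mul_left r (by omega)
          simp only [Nat.mul_one] at this
          omega
        rw [if_pos h1, if_neg (Nat.succ_ne_zero m)]
        simp only [Nat.add_sub_cancel]
        congr 1
        have hrm : r * (m + 1) = r * m + r := by ring
        omega
end
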